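/- Let X_1, ..., X_m be independent mean-zero real random vectors in ℝ^p with |X_{ij}| ≤ B a.s. and max_j m^{-1} Σ_i E[X_{ij}²] ≤ σ². Then E[max_{1≤j≤p} |m^{-1/2} Σ_{i=1}^m X_{ij}|] ≤ C(σ√(log p) + B log(p)/√m) for a universal constant C. -/

import Mathlib

set_option maxHeartbeats 1000000

open MeasureTheory ProbabilityTheory
lemma expA1 {y : ℝ} (hy : y ≤ 0) : Real.exp y ≤ 1 + y + y ^ 2 / 2 := by
  have h : MonotoneOn (fun y : ℝ => Real.exp y - (1 + y + y ^ 2 / 2)) (Set.Iic 0) := by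
    apply monotoneOn_of_deriv_nonneg (convex_Iic 0)
    · exact (Real.continuous_exp.sub (by continuity)).continuousOn
    · intro x hx
      exact (((Real.hasDerivAt_exp x).sub
        ((((hasDerivAt_id x).const_add 1).add
          ((hasDerivAt_pow 2 x).div_const 2)))).differentiableAt).differentiableWithinAt
    · intro x hx
      have hd : HasDerivAt (fun y : ℝ => Real.exp y - (1 + y + y ^ 2 / 2))
          (Real.exp x - (1 + (2 * x ^ 1 / 2))) x :=
        (Real.hasDerivAt_exp x).sub
          ((((hasDerivAt_id x).const_add 1).add ((hasDerivAt_pow 2 x).div_const 2)))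
      rw [hd.deriv]
      have := Real.add_one_le_exp x
      simp only [pow_one]
      linarith
  have key := h (Set.mem_Iic.2 hy) (Set.mem_Iic.2 le_rfl) hy
  simp only [Real.exp_zero] at key
  nlinarith

lemma expA2 {y : ℝ} (hy : 0 ≤ y) : Real.exp y ≤ 1 + y + y ^ 2 / 2 * Real.exp y := by
  have h : MonotoneOn (fun y : ℝ => (1 + y) * Real.exp (-y) + y ^ 2 / 2) (Set.Ici 0) := by
    apply monotoneOn_of_deriv_nonneg (convex_Ici 0)
    · exact (((continuous_const.add continuous_id).mul
        (Real.continuous_exp.comp continuous_neg)).add (by continuity)).continuousOn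
    · intro x hx
      apply DifferentiableAt.differentiableWithinAt; fun_prop
    · intro x hx
      have hx' : 0 < x := by simpa using hx
      have h1 : HasDerivAt (fun y : ℝ => (1 + y) * Real.exp (-y))
          (1 * Real.exp (-x) + (1 + x) * (Real.exp (-x) * (-1))) x :=
        (((hasDerivAt_id x).const_add 1).mul ((Real.hasDerivAt_exp (-x)).comp x
          (hasDerivAt_neg x)))
      have h2 : HasDerivAt (fun y : ℝ => y ^ 2 / 2) (2 * x ^ 1 / 2) x :=
        (hasDerivAt_pow 2 x).div_const 2
      have h12 : HasDerivAt (fun y : ℝ => (1 + y) * Real.exp (-y) + y ^ 2 / 2) _ x := h1.add h2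
      rw [h12.deriv]
      have h3 : Real.exp (-x) ≤ 1 := by
        rw [Real.exp_le_one_iff]; linarith
      simp only [pow_one]
      nlinarith [Real.exp_pos (-x)]
  have key := h (Set.mem_Ici.2 le_rfl) (Set.mem_Ici.2 hy) hy
  simp only [neg_zero, Real.exp_zero, mul_one] at key
  have hpos := Real.exp_pos y
  have hmul : Real.exp (-y) * Real.exp y = 1 := by
    rw [← Real.exp_add]; simp
  nlinarith

lemma expA {c y : ℝ} (hc : 0 ≤ c) (hyc : y ≤ c) :
    Real.exp y ≤ 1 + y + y ^ 2 / 2 * Real.exp c := by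
  rcases le_total y 0 with hy | hy
  · have := expA1 hy
    have h1 : (1:ℝ) ≤ Real.exp c := Real.one_le_exp hc
    nlinarith [sq_nonneg y]
  · have := expA2 hy
    have h1 : Real.exp y ≤ Real.exp c := Real.exp_le_exp.2 hyc
    nlinarith [sq_nonneg y]

lemma mgfB {Ω : Type} [MeasurableSpace Ω] {μ : Measure Ω} [IsProbabilityMeasure μ]
    {Y : Ω → ℝ} {b t : ℝ} (hb : 0 ≤ b) (hmeas : Measurable Y)
    (hbd : ∀ᵐ ω ∂μ, |Y ω| ≤ b) (hmean : ∫ ω, Y ω ∂μ = 0) :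
    mgf Y μ t ≤ Real.exp (t ^ 2 * (∫ ω, Y ω ^ 2 ∂μ) / 2 * Real.exp (|t| * b)) := by
  set c := |t| * b with hc
  have hc0 : 0 ≤ c := mul_nonneg (abs_nonneg t) hb
  have hY : Integrable Y μ := by
    refine (integrable_const b).mono' hmeas.aestronglyMeasurable ?_
    filter_upwards [hbd] with ω h using by simpa using h
  have hY2 : Integrable (fun ω => Y ω ^ 2) μ := by
    refine (integrable_const (b ^ 2)).mono' (hmeas.pow_const 2).aestronglyMeasurable ?_
    filter_upwards [hbd] with ω h
    simp only [norm_pow, Real.norm_eq_abs]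
    exact pow_le_pow_left₀ (abs_nonneg _) h 2
  have hRHSint : Integrable (fun ω => 1 + t * Y ω + (t * Y ω) ^ 2 / 2 * Real.exp c) μ := by
    apply Integrable.add
    · exact (integrable_const 1).add (hY.const_mul t)
    · have : (fun ω => (t * Y ω) ^ 2 / 2 * Real.exp c)
          = fun ω => (t ^ 2 / 2 * Real.exp c) * Y ω ^ 2 := by
        funext ω; ring
      rw [this]; exact hY2.const_mul _
  have hpt : ∀ᵐ ω ∂μ, Real.exp (t * Y ω) ≤ 1 + t * Y ω + (t * Y ω) ^ 2 / 2 * Real.exp c := by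
    filter_upwards [hbd] with ω h
    refine expA hc0 ?_
    calc t * Y ω ≤ |t * Y ω| := le_abs_self _
    _ = |t| * |Y ω| := abs_mul t _
    _ ≤ |t| * b := by exact mul_le_mul_of_nonneg_left h (abs_nonneg t)
  have h1 : mgf Y μ t ≤ ∫ ω, (1 + t * Y ω + (t * Y ω) ^ 2 / 2 * Real.exp c) ∂μ := by
    rw [mgf]
    exact integral_mono_ae (by
      refine (integrable_const (Real.exp c)).mono'
        ((hmeas.const_mul t).exp).aestronglyMeasurable ?_
      filter_upwards [hbd] with ω h
      rw [Real.norm_eq_abs, abs_of_pos (Real.exp_pos _)]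
      apply Real.exp_le_exp.2
      calc t * Y ω ≤ |t * Y ω| := le_abs_self _
      _ = |t| * |Y ω| := abs_mul t _
      _ ≤ |t| * b := mul_le_mul_of_nonneg_left h (abs_nonneg t)) hRHSint hpt
  have h2 : ∫ ω, (1 + t * Y ω + (t * Y ω) ^ 2 / 2 * Real.exp c) ∂μ
      = 1 + t ^ 2 * (∫ ω, Y ω ^ 2 ∂μ) / 2 * Real.exp c := by
    have he : (fun ω => (t * Y ω) ^ 2 / 2 * Real.exp c)
        = fun ω => (t ^ 2 / 2 * Real.exp c) * Y ω ^ 2 := by funext ω; ring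
    have e1 : ∫ ω, (1 + t * Y ω + (t * Y ω) ^ 2 / 2 * Real.exp c) ∂μ
        = ∫ ω, (1 + (t * Y ω + (t ^ 2 / 2 * Real.exp c) * Y ω ^ 2)) ∂μ := by
      congr 1; funext ω; ring
    have i2 : Integrable (fun ω => t ^ 2 / 2 * Real.exp c * Y ω ^ 2) μ := hY2.const_mul _
    have i1 : Integrable (fun ω => t * Y ω + t ^ 2 / 2 * Real.exp c * Y ω ^ 2) μ :=
      (hY.const_mul t).add i2
    rw [e1, integral_add (integrable_const 1) i1,
      integral_add (hY.const_mul t) i2, integral_const,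
      integral_const_mul, integral_const_mul, hmean]
    simp
    ring
  calc mgf Y μ t ≤ 1 + t ^ 2 * (∫ ω, Y ω ^ 2 ∂μ) / 2 * Real.exp c := h1.trans_eq h2
  _ ≤ Real.exp (t ^ 2 * (∫ ω, Y ω ^ 2 ∂μ) / 2 * Real.exp c) := by
      have := Real.add_one_le_exp (t ^ 2 * (∫ ω, Y ω ^ 2 ∂μ) / 2 * Real.exp c)
      linarith

lemma mgfS {Ω : Type} [MeasurableSpace Ω] {μ : Measure Ω} [IsProbabilityMeasure μ]
    {m : ℕ} {Y : Fin m → Ω → ℝ} {b t : ℝ} (hb : 0 ≤ b)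
    (hmeas : ∀ i, Measurable (Y i))
    (hind : iIndepFun Y μ)
    (hbd : ∀ i, ∀ᵐ ω ∂μ, |Y i ω| ≤ b) (hmean : ∀ i, ∫ ω, Y i ω ∂μ = 0) :
    mgf (fun ω => ∑ i, Y i ω) μ t ≤
      Real.exp (t ^ 2 * (∑ i, ∫ ω, Y i ω ^ 2 ∂μ) / 2 * Real.exp (|t| * b)) := by
  have hfun : (fun ω => ∑ i, Y i ω) = ∑ i, Y i := by
    funext ω; simp
  rw [hfun, hind.mgf_sum hmeas Finset.univ]
  calc ∏ i, mgf (Y i) μ t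
      ≤ ∏ i, Real.exp (t ^ 2 * (∫ ω, Y i ω ^ 2 ∂μ) / 2 * Real.exp (|t| * b)) := by
        refine Finset.prod_le_prod (fun i _ => mgf_nonneg) (fun i _ => ?_)
        exact mgfB hb (hmeas i) (hbd i) (hmean i)
    _ = Real.exp (∑ i, t ^ 2 * (∫ ω, Y i ω ^ 2 ∂μ) / 2 * Real.exp (|t| * b)) := by
        rw [Real.exp_sum]
    _ = Real.exp (t ^ 2 * (∑ i, ∫ ω, Y i ω ^ 2 ∂μ) / 2 * Real.exp (|t| * b)) := by
        rw [← Finset.sum_mul, ← Finset.sum_div, ← Finset.mul_sum]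

/-- Maximal inequality for independent bounded centered random vectors: there is a universal
constant `C` such that `E[max_j |m^{-1/2} Σ_i X_{ij}|] ≤ C (σ √(log p) + B log p / √m)`. -/
theorem stmt18 :
    ∃ C : ℝ, 0 < C ∧
      ∀ (Ω : Type) (mΩ : MeasurableSpace Ω) (μ : Measure Ω), IsProbabilityMeasure μ →
        ∀ (m p : ℕ), 1 ≤ m → 2 ≤ p →
          ∀ (X : Fin m → Fin p → Ω → ℝ) (B σ : ℝ), 0 < B → 0 < σ →
            (∀ i j, Measurable (X i j)) →
            iIndepFun (m := fun _ : Fin m => (inferInstance : MeasurableSpace (Fin p → ℝ)))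
              (fun i ω j => X i j ω) μ →
            (∀ i j, ∫ ω, X i j ω ∂μ = 0) →
            (∀ᵐ ω ∂μ, ∀ i j, |X i j ω| ≤ B) →
            (∀ j, (m : ℝ)⁻¹ * ∑ i : Fin m, ∫ ω, X i j ω ^ 2 ∂μ ≤ σ ^ 2) →
            (∫ ω, ⨆ j : Fin p, |(m : ℝ) ^ (-(1:ℝ)/2) * ∑ i : Fin m, X i j ω| ∂μ) ≤
              C * (σ * Real.sqrt (Real.log p) + B * Real.log p / Real.sqrt m) := by
  refine ⟨5, by norm_num, ?_⟩
  intro Ω mΩ μ hprob m p hm hp X B σ hB hσ hXmeas hindep hmean hbd hvar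
  haveI := hprob
  haveI : Nonempty (Fin p) := ⟨⟨0, by omega⟩⟩
  -- basic positivity facts
  have hm1 : (1:ℝ) ≤ (m:ℝ) := by exact_mod_cast hm
  have hm0 : (0:ℝ) < m := by linarith
  have hsm : (0:ℝ) < Real.sqrt m := Real.sqrt_pos.2 hm0
  have hp2 : (2:ℝ) ≤ (p:ℝ) := by exact_mod_cast hp
  have hlogp : 0 < Real.log p := Real.log_pos (by linarith)
  set L : ℝ := Real.log (2 * p) with hLdef
  have hL : 0 < L := Real.log_pos (by linarith)
  have hLle : L ≤ 2 * Real.log p := by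
    rw [hLdef, Real.log_mul (by norm_num) (by positivity), two_mul]
    have : Real.log 2 ≤ Real.log p := Real.log_le_log (by norm_num) hp2
    linarith
  have hsL : 0 < Real.sqrt L := Real.sqrt_pos.2 hL
  set u : ℝ := min (Real.sqrt L / (σ * Real.sqrt m)) (1 / B) with hudef
  have hu : 0 < u := lt_min (by positivity) (by positivity)
  have huB : u * B ≤ 1 := by
    have : u ≤ 1 / B := min_le_right _ _
    calc u * B ≤ (1 / B) * B := by nlinarith
    _ = 1 := by field_simp
  -- the sums
  set S : Fin p → Ω → ℝ := fun j ω => ∑ i, X i j ω with hSdef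
  have hSmeas : ∀ j, Measurable (S j) := fun j => Finset.measurable_sum _ (fun i _ => hXmeas i j)
  have hSbd : ∀ᵐ ω ∂μ, ∀ j, |S j ω| ≤ m * B := by
    filter_upwards [hbd] with ω h j
    calc |S j ω| ≤ ∑ i, |X i j ω| := Finset.abs_sum_le_sum_abs _ _
    _ ≤ ∑ _i : Fin m, B := Finset.sum_le_sum (fun i _ => h i j)
    _ = m * B := by simp [mul_comm]
  -- mgf bound for each S j at ±u
  have hmgf : ∀ j : Fin p, ∀ t : ℝ, |t| = u →
      mgf (S j) μ t ≤ Real.exp (u ^ 2 * ((m:ℝ) * σ ^ 2) / 2 * Real.exp 1) := by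
    intro j t ht
    have hindj : iIndepFun (m := fun _ : Fin m => (inferInstance : MeasurableSpace ℝ))
        (fun i ω => X i j ω) μ :=
      hindep.comp (fun _ f => f j) (fun _ => measurable_pi_apply j)
    have hbdj : ∀ i : Fin m, ∀ᵐ ω ∂μ, |X i j ω| ≤ B := by
      intro i; filter_upwards [hbd] with ω h using h i j
    have h1 := mgfS (le_of_lt hB) (fun i => hXmeas i j) hindj hbdj (fun i => hmean i j)
      (t := t)
    refine h1.trans (Real.exp_le_exp.2 ?_)
    have hsum : ∑ i, ∫ ω, X i j ω ^ 2 ∂μ ≤ (m:ℝ) * σ ^ 2 := by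
      have := hvar j
      rw [inv_mul_le_iff₀ hm0] at this
      linarith [this]
    have hexp : Real.exp (|t| * B) ≤ Real.exp 1 := by
      apply Real.exp_le_exp.2; rw [ht]; exact huB
    have hsum0 : 0 ≤ ∑ i, ∫ ω, X i j ω ^ 2 ∂μ :=
      Finset.sum_nonneg fun i _ => integral_nonneg (fun ω => sq_nonneg _)
    have ht2 : t ^ 2 = u ^ 2 := by rw [← sq_abs, ht]
    calc t ^ 2 * (∑ i, ∫ ω, X i j ω ^ 2 ∂μ) / 2 * Real.exp (|t| * B)
        ≤ t ^ 2 * ((m:ℝ) * σ ^ 2) / 2 * Real.exp (|t| * B) := by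
          gcongr
      _ ≤ u ^ 2 * ((m:ℝ) * σ ^ 2) / 2 * Real.exp 1 := by
          rw [ht2]
          apply mul_le_mul_of_nonneg_left hexp
          positivity
  -- the log-sum-exp function
  set W : Ω → ℝ := fun ω => ∑ j : Fin p, (Real.exp (u * S j ω) + Real.exp (-u * S j ω))
    with hWdef
  have hWmeas : Measurable W := by
    apply Finset.measurable_sum
    intro j _
    exact (((hSmeas j).const_mul u).exp).add (((hSmeas j).const_mul (-u)).exp)
  have hWge : ∀ ω, 2 * p ≤ W ω := by
    intro ω
    have : ∀ j : Fin p, (2:ℝ) ≤ Real.exp (u * S j ω) + Real.exp (-u * S j ω) := by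
      intro j
      have h1 := Real.exp_pos (u * S j ω)
      have h2 := Real.exp_pos (-u * S j ω)
      have h3 : Real.exp (u * S j ω) * Real.exp (-u * S j ω) = 1 := by
        rw [← Real.exp_add]; ring_nf; exact Real.exp_zero
      nlinarith [sq_nonneg (Real.exp (u * S j ω) - 1), mul_pos h1 h2]
    calc (2:ℝ) * p = ∑ _j : Fin p, (2:ℝ) := by simp [mul_comm]
    _ ≤ W ω := Finset.sum_le_sum (fun j _ => this j)
  have hWbd : ∀ᵐ ω ∂μ, W ω ≤ 2 * p * Real.exp (u * (m * B)) := by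
    filter_upwards [hSbd] with ω h
    have : ∀ j : Fin p, Real.exp (u * S j ω) + Real.exp (-u * S j ω)
        ≤ 2 * Real.exp (u * (m * B)) := by
      intro j
      have h1 : u * S j ω ≤ u * (m * B) := by
        have := (abs_le.1 (h j)).2
        nlinarith
      have h2 : -u * S j ω ≤ u * (m * B) := by
        have := (abs_le.1 (h j)).1
        nlinarith
      have := Real.exp_le_exp.2 h1
      have := Real.exp_le_exp.2 h2
      linarith
    calc W ω ≤ ∑ _j : Fin p, 2 * Real.exp (u * (m * B)) :=
        Finset.sum_le_sum (fun j _ => this j)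
    _ = 2 * p * Real.exp (u * (m * B)) := by
        rw [Finset.sum_const, Finset.card_univ, Fintype.card_fin, nsmul_eq_mul]; ring
  have hWint : Integrable W μ := by
    refine (integrable_const (2 * p * Real.exp (u * (m * B)))).mono'
      hWmeas.aestronglyMeasurable ?_
    filter_upwards [hWbd] with ω h
    rw [Real.norm_eq_abs, abs_of_nonneg (by linarith [hWge ω, hp2])]
    exact h
  -- E W ≤ 2 p K
  have hint : ∀ (j : Fin p) (t : ℝ), |t| = u → Integrable (fun ω => Real.exp (t * S j ω)) μ := by
    intro j t ht
    refine (integrable_const (Real.exp (u * ((m:ℝ) * B)))).mono'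
      (((hSmeas j).const_mul t).exp).aestronglyMeasurable ?_
    filter_upwards [hSbd] with ω h
    rw [Real.norm_eq_abs, abs_of_pos (Real.exp_pos _)]
    apply Real.exp_le_exp.2
    calc t * S j ω ≤ |t * S j ω| := le_abs_self _
    _ = |t| * |S j ω| := abs_mul _ _
    _ = u * |S j ω| := by rw [ht]
    _ ≤ u * ((m:ℝ) * B) := mul_le_mul_of_nonneg_left (h j) hu.le
  have habsu : |u| = u := abs_of_pos hu
  have habsnu : |(-u)| = u := by rw [abs_neg]; exact habsu
  have hEW : ∫ ω, W ω ∂μ ≤ 2 * p * Real.exp (u ^ 2 * ((m:ℝ) * σ ^ 2) / 2 * Real.exp 1) := by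
    have hsplit : ∫ ω, W ω ∂μ
        = ∑ j : Fin p, ((∫ ω, Real.exp (u * S j ω) ∂μ) + ∫ ω, Real.exp (-u * S j ω) ∂μ) := by
      rw [hWdef]
      rw [integral_finset_sum (f := fun (j : Fin p) (ω : Ω) =>
          Real.exp (u * S j ω) + Real.exp (-u * S j ω)) Finset.univ
        (fun j _ => Integrable.add (hint j u habsu) (hint j (-u) habsnu))]
      exact Finset.sum_congr rfl fun j _ =>
        integral_add (hint j u habsu) (hint j (-u) habsnu)
    rw [hsplit]
    have hbdj : ∀ j : Fin p, (∫ ω, Real.exp (u * S j ω) ∂μ) + ∫ ω, Real.exp (-u * S j ω) ∂μ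
        ≤ 2 * Real.exp (u ^ 2 * ((m:ℝ) * σ ^ 2) / 2 * Real.exp 1) := by
      intro j
      have g1 : (∫ ω, Real.exp (u * S j ω) ∂μ) = mgf (S j) μ u := rfl
      have g2 : (∫ ω, Real.exp (-u * S j ω) ∂μ) = mgf (S j) μ (-u) := rfl
      rw [g1, g2]
      have := hmgf j u habsu
      have := hmgf j (-u) habsnu
      linarith
    calc ∑ j : Fin p, ((∫ ω, Real.exp (u * S j ω) ∂μ) + ∫ ω, Real.exp (-u * S j ω) ∂μ)
        ≤ ∑ _j : Fin p, 2 * Real.exp (u ^ 2 * ((m:ℝ) * σ ^ 2) / 2 * Real.exp 1) :=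
          Finset.sum_le_sum fun j _ => hbdj j
      _ = 2 * p * Real.exp (u ^ 2 * ((m:ℝ) * σ ^ 2) / 2 * Real.exp 1) := by
          rw [Finset.sum_const, Finset.card_univ, Fintype.card_fin, nsmul_eq_mul]; ring
  have hEWpos : 0 < ∫ ω, W ω ∂μ := by
    have h1 : (2:ℝ) * p ≤ ∫ ω, W ω ∂μ := by
      have := integral_mono (integrable_const ((2:ℝ) * p)) hWint (fun ω => hWge ω)
      simpa using this
    linarith
  -- log of E W
  set K : ℝ := u ^ 2 * ((m:ℝ) * σ ^ 2) / 2 * Real.exp 1 with hKdef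
  have hlogEW : Real.log (∫ ω, W ω ∂μ) ≤ L + K := by
    calc Real.log (∫ ω, W ω ∂μ) ≤ Real.log (2 * p * Real.exp K) :=
      Real.log_le_log hEWpos hEW
    _ = L + K := by
        rw [Real.log_mul (by positivity) (Real.exp_ne_zero _), Real.log_exp, hLdef]
  -- E log W ≤ log E W
  have hlogWint : Integrable (fun ω => Real.log (W ω)) μ := by
    refine (integrable_const (Real.log (2 * p) + u * ((m:ℝ) * B))).mono'
      hWmeas.log.aestronglyMeasurable ?_
    filter_upwards [hWbd] with ω h
    have hW0 : (0:ℝ) < W ω := by linarith [hWge ω, hp2]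
    have hlog0 : 0 ≤ Real.log (W ω) := Real.log_nonneg (by linarith [hWge ω, hp2])
    rw [Real.norm_eq_abs, abs_of_nonneg hlog0]
    calc Real.log (W ω) ≤ Real.log (2 * p * Real.exp (u * ((m:ℝ) * B))) := by
          apply Real.log_le_log hW0
          convert h using 3
      _ = Real.log (2 * p) + u * ((m:ℝ) * B) := by
          rw [Real.log_mul (by positivity) (Real.exp_ne_zero _), Real.log_exp]
  have hElogW : ∫ ω, Real.log (W ω) ∂μ ≤ Real.log (∫ ω, W ω ∂μ) := by
    set I : ℝ := ∫ ω, W ω ∂μ with hIdef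
    have hI0 : 0 < I := hEWpos
    have hkey : ∀ᵐ ω ∂μ, Real.log (W ω) ≤ Real.log I + (W ω / I - 1) := by
      apply Filter.Eventually.of_forall
      intro ω
      have hW0 : (0:ℝ) < W ω := by linarith [hWge ω, hp2]
      have h1 : Real.log (W ω / I) ≤ W ω / I - 1 :=
        Real.log_le_sub_one_of_pos (div_pos hW0 hI0)
      rw [Real.log_div hW0.ne' hI0.ne'] at h1
      linarith
    have hrint : Integrable (fun ω => Real.log I + (W ω / I - 1)) μ := by
      apply Integrable.add (integrable_const _)
      apply Integrable.sub _ (integrable_const 1)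
      exact hWint.div_const I
    calc ∫ ω, Real.log (W ω) ∂μ ≤ ∫ ω, (Real.log I + (W ω / I - 1)) ∂μ :=
        integral_mono_ae hlogWint hrint hkey
    _ = Real.log I := by
        have i2 : Integrable (fun ω => W ω / I) μ := hWint.div_const I
        have i1 : Integrable (fun ω => W ω / I - 1) μ := by
          exact i2.sub (integrable_const 1)
        rw [integral_add (integrable_const _) i1, integral_const,
          integral_sub i2 (integrable_const 1), integral_const, integral_div, ← hIdef]
        simp [div_self hI0.ne']
  -- pointwise bound on the sup
  have hpow : (m : ℝ) ^ (-(1:ℝ)/2) = (Real.sqrt m)⁻¹ := by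
    rw [show (-(1:ℝ)/2) = -(1/2) by ring, Real.rpow_neg (Nat.cast_nonneg m),
      ← Real.sqrt_eq_rpow]
  have hptwise : ∀ᵐ ω ∂μ, (⨆ j : Fin p, |(m : ℝ) ^ (-(1:ℝ)/2) * ∑ i : Fin m, X i j ω|)
      ≤ ((Real.sqrt m)⁻¹ / u) * Real.log (W ω) := by
    apply Filter.Eventually.of_forall
    intro ω
    apply ciSup_le
    intro j
    have hWj : Real.exp (u * |S j ω|) ≤ W ω := by
      have hterm : Real.exp (u * |S j ω|) ≤ Real.exp (u * S j ω) + Real.exp (-u * S j ω) := by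
        rcases abs_cases (S j ω) with ⟨he, _⟩ | ⟨he, _⟩
        · rw [he]; linarith [(Real.exp_pos (-u * S j ω)).le]
        · rw [he, mul_neg, ← neg_mul]; linarith [(Real.exp_pos (u * S j ω)).le]
      refine hterm.trans ?_
      rw [hWdef]
      exact Finset.single_le_sum
        (f := fun j => Real.exp (u * S j ω) + Real.exp (-u * S j ω))
        (fun j _ => by positivity) (Finset.mem_univ j)
    have hlog : u * |S j ω| ≤ Real.log (W ω) := by
      have h1 : Real.log (Real.exp (u * |S j ω|)) ≤ Real.log (W ω) :=
        Real.log_le_log (Real.exp_pos _) hWj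
      rwa [Real.log_exp] at h1
    have hSsum : (∑ i : Fin m, X i j ω) = S j ω := rfl
    rw [hpow, hSsum, abs_mul, abs_of_pos (inv_pos.2 hsm)]
    have h2 : |S j ω| ≤ Real.log (W ω) / u := by
      rw [le_div_iff₀ hu]
      linarith [mul_comm u |S j ω| ▸ hlog]
    calc (Real.sqrt (m:ℝ))⁻¹ * |S j ω| ≤ (Real.sqrt (m:ℝ))⁻¹ * (Real.log (W ω) / u) :=
        mul_le_mul_of_nonneg_left h2 (inv_pos.2 hsm).le
    _ = (Real.sqrt (m:ℝ))⁻¹ / u * Real.log (W ω) := by ring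
  -- combine
  have hmain : (∫ ω, ⨆ j : Fin p, |(m : ℝ) ^ (-(1:ℝ)/2) * ∑ i : Fin m, X i j ω| ∂μ)
      ≤ ((Real.sqrt m)⁻¹ / u) * (L + K) := by
    have hnn : 0 ≤ᵐ[μ] fun ω => ⨆ j : Fin p, |(m : ℝ) ^ (-(1:ℝ)/2) * ∑ i : Fin m, X i j ω| :=
      Filter.Eventually.of_forall fun ω => Real.iSup_nonneg fun j => abs_nonneg _
    have hri : Integrable (fun ω => ((Real.sqrt m)⁻¹ / u) * Real.log (W ω)) μ :=
      hlogWint.const_mul _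
    calc (∫ ω, ⨆ j : Fin p, |(m : ℝ) ^ (-(1:ℝ)/2) * ∑ i : Fin m, X i j ω| ∂μ)
        ≤ ∫ ω, ((Real.sqrt m)⁻¹ / u) * Real.log (W ω) ∂μ :=
          integral_mono_of_nonneg hnn hri hptwise
      _ = ((Real.sqrt m)⁻¹ / u) * ∫ ω, Real.log (W ω) ∂μ := integral_const_mul _ _
      _ ≤ ((Real.sqrt m)⁻¹ / u) * (L + K) := by
          apply mul_le_mul_of_nonneg_left _ (by positivity)
          exact hElogW.trans hlogEW
  -- final arithmetic
  refine hmain.trans ?_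
  set sm : ℝ := Real.sqrt m with hsmdef
  set sl : ℝ := Real.sqrt L with hsldef
  have hsm2 : sm ^ 2 = (m:ℝ) := Real.sq_sqrt hm0.le
  have hsl2 : sl ^ 2 = L := Real.sq_sqrt hL.le
  have hsm' : 0 < sm := hsm
  have hsl' : 0 < sl := hsL
  have he3 : Real.exp 1 ≤ 3 := by
    have := Real.exp_one_lt_d9
    linarith
  have hE0 : (0:ℝ) < Real.exp 1 := Real.exp_pos 1
  have hsqrt2 : sl ≤ (3/2) * Real.sqrt (Real.log p) := by
    have h1 : sl ≤ Real.sqrt (2 * Real.log p) := Real.sqrt_le_sqrt hLle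
    have h2 : Real.sqrt (2 * Real.log p) = Real.sqrt 2 * Real.sqrt (Real.log p) :=
      Real.sqrt_mul (by norm_num) _
    have h3 : Real.sqrt 2 ≤ 3/2 := by
      rw [show (3:ℝ)/2 = Real.sqrt ((3/2)^2) from (Real.sqrt_sq (by norm_num)).symm]
      exact Real.sqrt_le_sqrt (by norm_num)
    calc sl ≤ Real.sqrt 2 * Real.sqrt (Real.log p) := h1.trans_eq h2
    _ ≤ (3/2) * Real.sqrt (Real.log p) :=
      mul_le_mul_of_nonneg_right h3 (Real.sqrt_nonneg _)
  rcases le_total (sl / (σ * sm)) (1 / B) with hc | hc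
  · -- case u = √L / (σ √m)
    have hueq : u = sl / (σ * sm) := by rw [hudef]; exact min_eq_left hc
    have lhs_eq : sm⁻¹ / u * (L + K) = σ * sl * (1 + Real.exp 1 / 2) := by
      rw [hKdef, hueq, ← hsl2, ← hsm2]
      field_simp
    rw [lhs_eq]
    have h1 : σ * sl ≤ σ * ((3/2) * Real.sqrt (Real.log p)) :=
      mul_le_mul_of_nonneg_left hsqrt2 hσ.le
    have h2 : (1:ℝ) + Real.exp 1 / 2 ≤ 5/2 := by linarith
    have h3 : 0 ≤ σ * sl := by positivity
    have h4 : 0 ≤ B * Real.log p / sm := by positivity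
    have h5 : 0 ≤ σ * Real.sqrt (Real.log p) := by positivity
    nlinarith [mul_le_mul_of_nonneg_right h1 (by linarith : (0:ℝ) ≤ 1 + Real.exp 1 / 2),
      mul_le_mul_of_nonneg_left h2 h3]
  · -- case u = 1/B
    have hueq : u = 1 / B := by rw [hudef]; exact min_eq_right hc
    have hkey : σ * sm ≤ B * sl := by
      rw [div_le_div_iff₀ hB (by positivity)] at hc
      linarith
    have hms : (m:ℝ) * σ ^ 2 ≤ B ^ 2 * L := by
      rw [← hsm2, ← hsl2]
      nlinarith [mul_le_mul_of_nonneg_left hkey (by positivity : (0:ℝ) ≤ σ * sm),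
        mul_le_mul_of_nonneg_left hkey (by positivity : (0:ℝ) ≤ B * sl)]
    have lhs_eq2 : sm⁻¹ / u * (L + K)
        = B / sm * (L + (m:ℝ) * σ ^ 2 * Real.exp 1 / (2 * B ^ 2)) := by
      rw [hKdef, hueq]
      field_simp
    rw [lhs_eq2]
    have h4 : (m:ℝ) * σ ^ 2 * Real.exp 1 / (2 * B ^ 2) ≤ (3/2) * L := by
      rw [div_le_iff₀ (by positivity)]
      nlinarith [hms, he3, hE0.le, hL.le, sq_nonneg B,
        mul_nonneg (by positivity : (0:ℝ) ≤ (m:ℝ)) (sq_nonneg σ)]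
    have key : B * (L + (m:ℝ) * σ ^ 2 * Real.exp 1 / (2 * B ^ 2)) ≤ 5 * (B * Real.log p) := by
      nlinarith [hB.le, hLle, hlogp, hL, h4]
    have h5 : 0 ≤ σ * Real.sqrt (Real.log p) := by positivity
    calc B / sm * (L + (m:ℝ) * σ ^ 2 * Real.exp 1 / (2 * B ^ 2))
        = (B * (L + (m:ℝ) * σ ^ 2 * Real.exp 1 / (2 * B ^ 2))) / sm := by ring
      _ ≤ (5 * (B * Real.log p)) / sm := by gcongr
      _ = 5 * (B * Real.log p / sm) := by ring
      _ ≤ 5 * (σ * Real.sqrt (Real.log p) + B * Real.log p / sm) := by linarith
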